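/- Let P = {V(Ω₁),…,V(Ω_p)} be a partition of V into p disjoint nonempty blocks, and let s ∈ {0,1}^N be a sampling pattern with exactly one 1 per block (say at node s_j ∈ V(Ω_j)) such that no two sampling nodes are adjacent (W(s_i, s_j) = 0 for i ≠ j, and more generally if s(v) = 1 then s(u) = 0 for all u with W(u,v) > 0). Suppose that for each j there is κ_j > 0 with Σ_{u ∈ V(Ω_j)} W(s_j, u) ≥ κ_j (a lower bound on the within-block degree of the sampling node, playing the role of the Sobolev bound C_{δ_j}/vol(Ω_j)^{2/δ_j}). Then the redness of s satisfies R_s ≤ (μ₂ + μ_N)² (1 − p/N)² / (4 μ₂ μ_N min_j κ_j). -/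

import Mathlib

open Finset Matrix

private lemma amgm_aux (x B : ℝ) (hB : 0 < B) : x - B ≤ x ^ 2 / (4 * B) := by
  rw [le_div_iff₀ (by positivity)]
  nlinarith [sq_nonneg (x - 2 * B)]

private lemma final_aux (S A B m M c q n : ℝ)
    (hq : 0 < q) (hn : 0 < n) (hm : 0 < m) (hM : 0 < M) (hc : 0 < c)
    (hA : A = q * (1 - q / n)) (hB : q * c ≤ B)
    (hS1 : S ≤ ((m + M) * A - B) / (m * M)) :
    (1 / q) * S ≤ (m + M) ^ 2 * (1 - q / n) ^ 2 / (4 * m * M * c) := by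
  have hBpos : 0 < B := lt_of_lt_of_le (mul_pos hq hc) hB
  have h2 : (m + M) * A - B ≤ ((m + M) * A) ^ 2 / (4 * B) := amgm_aux _ _ hBpos
  have h3 : ((m + M) * A) ^ 2 / (4 * B) ≤ ((m + M) * A) ^ 2 / (4 * (q * c)) :=
    div_le_div_of_nonneg_left (sq_nonneg _) (by positivity) (by linarith)
  have h4 : S ≤ (((m + M) * A) ^ 2 / (4 * (q * c))) / (m * M) :=
    le_trans hS1 (div_le_div_of_nonneg_right (le_trans h2 h3) (mul_pos hm hM).le)
  calc (1 / q) * S ≤ (1 / q) * ((((m + M) * A) ^ 2 / (4 * (q * c))) / (m * M)) :=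
        mul_le_mul_of_nonneg_left h4 (by positivity)
  _ = (m + M) ^ 2 * (1 - q / n) ^ 2 / (4 * m * M * c) := by
        rw [hA]
        field_simp

private lemma kant_aux (m M t x : ℝ) (hm : 0 < m) (h1 : m ≤ t) (h2 : t ≤ M) :
    x ^ 2 / t ≤ ((m + M - t) * x ^ 2) / (m * M) := by
  have ht : 0 < t := lt_of_lt_of_le hm h1
  have hM : 0 < M := lt_of_lt_of_le ht h2
  rw [div_le_div_iff₀ ht (by positivity)]
  nlinarith [sq_nonneg x, mul_nonneg (mul_nonneg (sq_nonneg x) (sub_nonneg.mpr h1))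
    (sub_nonneg.mpr h2)]

/-- Redness bound from a partition (Theorem 3): if `s` has exactly one `1` per block of a
partition of `V` into `p` blocks, no two sampling nodes are adjacent, and the within-block
degree of each sampling node is at least `κ_j > 0`, then
`R_s ≤ (μ₂+μ_N)²(1-p/N)² / (4 μ₂ μ_N min_j κ_j)`. -/
theorem stmt_18 {N : ℕ} (hN : 2 ≤ N)
    (W : Matrix (Fin N) (Fin N) ℝ)
    (hWsymm : W.IsSymm)
    (hWnonneg : ∀ u v, 0 ≤ W u v)
    (hWdiag : ∀ u, W u u = 0)
    (L : Matrix (Fin N) (Fin N) ℝ)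
    (hL : L = Matrix.diagonal (fun u => ∑ v, W u v) - W)
    (μ : Fin N → ℝ) (U : Matrix (Fin N) (Fin N) ℝ)
    (hU : Uᵀ * U = 1)
    (hμmono : Monotone μ)
    (hμ0 : μ (⟨0, by omega⟩ : Fin N) = 0)
    (hμ2 : 0 < μ (⟨1, by omega⟩ : Fin N))
    (hU0 : ∀ i, U i (⟨0, by omega⟩ : Fin N) = 1 / Real.sqrt N)
    (heig : ∀ ℓ, L.mulVec (fun i => U i ℓ) = μ ℓ • (fun i => U i ℓ))
    (p : ℕ) (hp0 : 0 < p) (hpN : p < N)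
    (Ω : Fin p → Finset (Fin N))
    (hΩne : ∀ j, (Ω j).Nonempty)
    (hdisj : ∀ i j, i ≠ j → Disjoint (Ω i) (Ω j))
    (hcover : Finset.univ.biUnion Ω = (Finset.univ : Finset (Fin N)))
    (sj : Fin p → Fin N) (hsj : ∀ j, sj j ∈ Ω j)
    (s : Fin N → ℝ)
    (hs01 : ∀ v, s v = 0 ∨ s v = 1)
    (hs1 : ∀ v, s v = 1 ↔ ∃ j, sj j = v)
    (hadj : ∀ u v, s v = 1 → 0 < W u v → s u = 0)
    (κ : Fin p → ℝ) (hκpos : ∀ j, 0 < κ j)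
    (hκ : ∀ j, κ j ≤ ∑ u ∈ Ω j, W (sj j) u) :
    (1 / (p : ℝ)) *
        ∑ ℓ ∈ Finset.univ.erase (⟨0, by omega⟩ : Fin N), ((Uᵀ.mulVec s) ℓ) ^ 2 / μ ℓ ≤
      (μ (⟨1, by omega⟩ : Fin N) + μ (⟨N - 1, by omega⟩ : Fin N)) ^ 2 *
          (1 - (p : ℝ) / N) ^ 2 /
        (4 * μ (⟨1, by omega⟩ : Fin N) * μ (⟨N - 1, by omega⟩ : Fin N) *
          Finset.univ.inf' (Finset.univ_nonempty_iff.mpr (Fin.pos_iff_nonempty.mp hp0)) κ) := by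

  -- basic index notation
  set e0 : Fin N := ⟨0, by omega⟩ with he0
  set e1 : Fin N := ⟨1, by omega⟩ with he1
  set eN : Fin N := ⟨N - 1, by omega⟩ with heN
  set c : ℝ := Finset.univ.inf' (Finset.univ_nonempty_iff.mpr (Fin.pos_iff_nonempty.mp hp0)) κ
    with hcdef
  set b : Fin N → ℝ := Uᵀ.mulVec s with hbdef
  set m : ℝ := μ e1 with hm
  set M : ℝ := μ eN with hM
  have hNR : (0:ℝ) < N := by positivity
  have hpR : (0:ℝ) < p := by positivity
  have hmpos : 0 < m := hμ2
  have hmM : m ≤ M := hμmono (show e1 ≤ eN from Fin.le_def.mpr (show 1 ≤ N - 1 by omega))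
  have hMpos : 0 < M := lt_of_lt_of_le hmpos hmM
  have hcpos : 0 < c := by
    rw [hcdef]
    exact (Finset.lt_inf'_iff _).mpr (fun j _ => hκpos j)
  have hcle : ∀ j, c ≤ κ j := fun j => Finset.inf'_le _ (Finset.mem_univ j)
  -- sampling set
  have hsj_inj : Function.Injective sj := by
    intro i j hij
    by_contra h
    exact (Finset.disjoint_left.mp (hdisj i j h)) (hsj i) (hij ▸ hsj j)
  set T : Finset (Fin N) := Finset.univ.image sj with hT
  have hTcard : T.card = p := by
    rw [hT, Finset.card_image_of_injective _ hsj_inj, Finset.card_univ, Fintype.card_fin]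
  have hsT : ∀ v, v ∈ T ↔ s v = 1 := by
    intro v
    rw [hs1 v, hT]
    simp
  have hsT0 : ∀ v, v ∉ T → s v = 0 := by
    intro v hv
    rcases hs01 v with h | h
    · exact h
    · exact absurd ((hsT v).mpr h) hv
  -- orthogonality
  have hUU : U * Uᵀ = 1 := mul_eq_one_comm.mp hU
  have hLU : L * U = U * Matrix.diagonal μ := by
    ext i ℓ
    rw [Matrix.mul_apply, Matrix.mul_diagonal]
    have h := congrFun (heig ℓ) i
    simp only [Matrix.mulVec, dotProduct, Pi.smul_apply, smul_eq_mul] at h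
    rw [h, mul_comm]
  have hLdec : L = U * Matrix.diagonal μ * Uᵀ := by
    calc L = L * (U * Uᵀ) := by rw [hUU, Matrix.mul_one]
    _ = (L * U) * Uᵀ := by rw [Matrix.mul_assoc]
    _ = U * Matrix.diagonal μ * Uᵀ := by rw [hLU]
  -- Parseval
  have hParseval : ∑ ℓ, (b ℓ) ^ 2 = ∑ i, (s i) ^ 2 := by
    have h1 : b ⬝ᵥ b = s ⬝ᵥ s := by
      rw [hbdef, Matrix.dotProduct_mulVec, Matrix.vecMul_transpose,
        Matrix.mulVec_mulVec, hUU, Matrix.one_mulVec]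
    simpa [dotProduct, sq] using h1
  have hWeighted : ∑ ℓ, μ ℓ * (b ℓ) ^ 2 = s ⬝ᵥ L.mulVec s := by
    have h1 : s ⬝ᵥ L.mulVec s = b ⬝ᵥ (Matrix.diagonal μ).mulVec b := by
      rw [hLdec, Matrix.mul_assoc, ← Matrix.mulVec_mulVec, Matrix.dotProduct_mulVec,
        ← Matrix.mulVec_mulVec, ← Matrix.mulVec_transpose, ← hbdef]
    rw [h1]
    simp [dotProduct, Matrix.mulVec_diagonal, sq]
    ring_nf
    exact Finset.sum_congr rfl (fun ℓ _ => by ring)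
  -- counting sums over s
  have hsum_s : ∑ v, s v = (p:ℝ) := by
    rw [← Finset.sum_add_sum_compl T]
    have h1 : ∑ v ∈ T, s v = ∑ v ∈ T, (1:ℝ) :=
      Finset.sum_congr rfl (fun v hv => (hsT v).mp hv)
    have h2 : ∑ v ∈ Tᶜ, s v = 0 :=
      Finset.sum_eq_zero (fun v hv => hsT0 v (Finset.mem_compl.mp hv))
    rw [h1, h2, Finset.sum_const, hTcard]
    simp
  have hsq : ∀ v, (s v) ^ 2 = s v := by
    intro v; rcases hs01 v with h | h <;> rw [h] <;> norm_num
  have hsum_s2 : ∑ v, (s v) ^ 2 = (p:ℝ) := by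
    rw [Finset.sum_congr rfl (fun v _ => hsq v), hsum_s]
  -- value of b at e0
  have hb0 : b e0 = (p:ℝ) / Real.sqrt N := by
    rw [hbdef]
    have : Uᵀ.mulVec s e0 = ∑ i, U i e0 * s i := by
      simp [Matrix.mulVec, dotProduct, Matrix.transpose_apply]
    rw [this]
    rw [Finset.sum_congr rfl (fun i _ => by rw [hU0 i])]
    rw [← Finset.mul_sum, hsum_s]
    ring
  have hsqrtN : Real.sqrt N ^ 2 = N := Real.sq_sqrt (le_of_lt hNR)
  have hb0sq : (b e0) ^ 2 = (p:ℝ)^2 / N := by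
    rw [hb0, div_pow, hsqrtN]
  -- A and B
  set A : ℝ := ∑ ℓ ∈ Finset.univ.erase e0, (b ℓ) ^ 2 with hAdef
  set B : ℝ := ∑ ℓ ∈ Finset.univ.erase e0, μ ℓ * (b ℓ) ^ 2 with hBdef
  have hAval : A = (p:ℝ) * (1 - (p:ℝ)/N) := by
    have h1 : (b e0)^2 + A = ∑ ℓ, (b ℓ)^2 :=
      Finset.add_sum_erase _ (fun ℓ => (b ℓ)^2) (Finset.mem_univ e0)
    have h2 : A = (p:ℝ) - (p:ℝ)^2/N := by
      have := h1.trans hParseval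
      rw [hsum_s2, hb0sq] at this
      linarith
    rw [h2]
    field_simp
  have hBfull : B = s ⬝ᵥ L.mulVec s := by
    have h1 : μ e0 * (b e0)^2 + B = ∑ ℓ, μ ℓ * (b ℓ)^2 :=
      Finset.add_sum_erase _ (fun ℓ => μ ℓ * (b ℓ)^2) (Finset.mem_univ e0)
    rw [hμ0] at h1
    rw [← hWeighted]
    linarith
  -- lower bound on B
  have hdeg : ∀ j, κ j ≤ ∑ u, W (sj j) u := by
    intro j
    refine le_trans (hκ j) (Finset.sum_le_sum_of_subset_of_nonneg (Finset.subset_univ _)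
      (fun u _ _ => hWnonneg _ _))
  have hquad : s ⬝ᵥ L.mulVec s = ∑ v, (∑ u, W v u) * s v := by
    rw [hL]
    have hcross : ∀ v u, s v * (W v u * s u) = 0 := by
      intro v u
      rcases hs01 v with hv | hv
      · rw [hv]; ring
      rcases hs01 u with hu | hu
      · rw [hu]; ring
      have hW0 : W v u = 0 := by
        by_contra h
        have hpos : 0 < W v u := lt_of_le_of_ne (hWnonneg v u) (Ne.symm h)
        have := hadj v u hu hpos
        rw [this] at hv; norm_num at hv
      rw [hW0]; ring
    have expand : ∀ v, ((Matrix.diagonal (fun u => ∑ v, W u v) - W).mulVec s) v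
        = (∑ u, W v u) * s v - ∑ u, W v u * s u := by
      intro v
      rw [Matrix.sub_mulVec]
      simp [Matrix.mulVec, dotProduct, Matrix.diagonal_apply, ite_mul,
        Finset.sum_ite_eq]
    calc s ⬝ᵥ (Matrix.diagonal (fun u => ∑ v, W u v) - W).mulVec s
        = ∑ v, (s v * ((∑ u, W v u) * s v) - s v * (∑ u, W v u * s u)) := by
          refine Finset.sum_congr rfl (fun v _ => ?_)
          rw [expand v, mul_sub]
    _ = ∑ v, s v * ((∑ u, W v u) * s v) - ∑ v, s v * (∑ u, W v u * s u) :=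
          Finset.sum_sub_distrib _ _
    _ = ∑ v, (∑ u, W v u) * s v := by
          have hz : ∑ v, s v * (∑ u, W v u * s u) = 0 := by
            refine Finset.sum_eq_zero (fun v _ => ?_)
            rw [Finset.mul_sum]
            exact Finset.sum_eq_zero (fun u _ => hcross v u)
          rw [hz, sub_zero]
          refine Finset.sum_congr rfl (fun v _ => ?_)
          have h2 : s v * ((∑ u, W v u) * s v) = (∑ u, W v u) * (s v)^2 := by ring
          rw [h2, hsq v]
  have hBlb : (p:ℝ) * c ≤ B := by
    rw [hBfull, hquad]
    have h1 : ∑ v, (∑ u, W v u) * s v = ∑ v ∈ T, (∑ u, W v u) := by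
      rw [← Finset.sum_add_sum_compl T]
      have h2 : ∑ v ∈ Tᶜ, (∑ u, W v u) * s v = 0 :=
        Finset.sum_eq_zero (fun v hv => by rw [hsT0 v (Finset.mem_compl.mp hv), mul_zero])
      rw [h2, add_zero]
      exact Finset.sum_congr rfl (fun v hv => by rw [(hsT v).mp hv, mul_one])
    rw [h1, hT, Finset.sum_image (fun i _ j _ h => hsj_inj h)]
    calc (p:ℝ) * c = ∑ _j : Fin p, c := by
          rw [Finset.sum_const, Finset.card_univ, Fintype.card_fin, nsmul_eq_mul]
    _ ≤ ∑ j, ∑ u, W (sj j) u :=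
          Finset.sum_le_sum (fun j _ => le_trans (hcle j) (hdeg j))
  have hBpos : 0 < B := lt_of_lt_of_le (by positivity) hBlb
  -- eigenvalue bounds on the erased set
  have hμbounds : ∀ ℓ ∈ Finset.univ.erase e0, m ≤ μ ℓ ∧ μ ℓ ≤ M := by
    intro ℓ hℓ
    have hne : ℓ ≠ e0 := Finset.ne_of_mem_erase hℓ
    have hval : 1 ≤ ℓ.val := by
      by_contra h
      exact hne (by rw [he0]; exact Fin.ext (show ℓ.val = 0 by omega))
    have hlt := ℓ.isLt
    constructor
    · exact hμmono (by simp [Fin.le_def, he1]; omega)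
    · exact hμmono (by simp [Fin.le_def, heN]; omega)
  -- Kantorovich pointwise bound
  have hkey : ∀ ℓ ∈ Finset.univ.erase e0,
      (b ℓ)^2 / μ ℓ ≤ ((m + M - μ ℓ) * (b ℓ)^2) / (m * M) := by
    intro ℓ hℓ
    exact kant_aux m M (μ ℓ) (b ℓ) hmpos (hμbounds ℓ hℓ).1 (hμbounds ℓ hℓ).2
  -- sum it up
  set S : ℝ := ∑ ℓ ∈ Finset.univ.erase e0, (b ℓ)^2 / μ ℓ with hSdef
  clear_value S A B b c m M
  have hS1 : S ≤ ((m + M) * A - B) / (m * M) := by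
    rw [hSdef]
    calc ∑ ℓ ∈ Finset.univ.erase e0, (b ℓ)^2 / μ ℓ
        ≤ ∑ ℓ ∈ Finset.univ.erase e0, ((m + M - μ ℓ) * (b ℓ)^2) / (m * M) :=
          Finset.sum_le_sum hkey
    _ = (∑ ℓ ∈ Finset.univ.erase e0, (m + M - μ ℓ) * (b ℓ)^2) / (m * M) := by
          rw [Finset.sum_div]
    _ = ((m + M) * A - B) / (m * M) := by
          have hnum : ∑ ℓ ∈ Finset.univ.erase e0, (m + M - μ ℓ) * (b ℓ)^2
              = (m + M) * A - B := by
            rw [hAdef, hBdef, Finset.mul_sum, ← Finset.sum_sub_distrib]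
            exact Finset.sum_congr rfl (fun ℓ _ => by ring)
          rw [hnum]
  exact final_aux S A B m M c p N hpR hNR hmpos hMpos hcpos hAval hBlb hS1
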